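/- arXiv:0904.4325 — 3 statements merged into one kernel-verified Lean document; each statement's English description precedes it below -/
import Mathlib

section
/- Let A ∈ M_{m,n}(ℂ) with m > n and let z = r e^{iθ} with 0 < r ≤ ‖A‖₂. Then there exist unit vectors x̂ ∈ ℂⁿ and ŷ ∈ ℂᵐ such that ŷ* A x̂ = z. In particular the boundary value ‖A‖₂ e^{iθ} is attained. -/
set_option maxHeartbeats 1000000

/-- The spectral norm (largest singular value) of a rectangular complex matrix. -/
noncomputable def specNorm {m n : ℕ} (A : Matrix (Fin m) (Fin n) ℂ) : ℝ :=
  ‖LinearMap.toContinuousLinearMap (Matrix.toEuclideanLin A)‖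

/-- The rectangular numerical range `w(A) = {y* A x : ‖x‖₂ = ‖y‖₂ = 1}`. -/
def numRange {m n : ℕ} (A : Matrix (Fin m) (Fin n) ℂ) : Set ℂ :=
  {z | ∃ (x : EuclideanSpace ℂ (Fin n)) (y : EuclideanSpace ℂ (Fin m)),
    ‖x‖ = 1 ∧ ‖y‖ = 1 ∧ dotProduct (star (y : Fin m → ℂ)) (A.mulVec (x : Fin n → ℂ)) = z}

open scoped InnerProductSpace in
theorem stmt2 {m n : ℕ} (hmn : n < m) (A : Matrix (Fin m) (Fin n) ℂ)
    (r θ : ℝ) (hr : 0 < r) (hrA : r ≤ specNorm A) :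
    ∃ (x : EuclideanSpace ℂ (Fin n)) (y : EuclideanSpace ℂ (Fin m)),
      ‖x‖ = 1 ∧ ‖y‖ = 1 ∧
      dotProduct (star (y : Fin m → ℂ)) (A.mulVec (x : Fin n → ℂ))
        = r * Complex.exp (θ * Complex.I) := by
  classical
  set T := LinearMap.toContinuousLinearMap (Matrix.toEuclideanLin A) with hTdef
  have hTpos : 0 < ‖T‖ := lt_of_lt_of_le hr hrA
  -- n must be positive
  have hn : 0 < n := by
    by_contra h
    push_neg at h
    interval_cases n
    · have : T = 0 := by
        ext x i
        have hx : x = 0 := Subsingleton.elim x 0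
        simp [hx]
      rw [this] at hTpos
      simp at hTpos
  -- find a maximizer on the unit sphere
  obtain ⟨x₀, hx₀mem, hx₀max⟩ :=
    (isCompact_sphere (0 : EuclideanSpace ℂ (Fin n)) 1).exists_isMaxOn
      ⟨EuclideanSpace.single ⟨0, hn⟩ (1 : ℂ), by
        simp [mem_sphere_iff_norm, EuclideanSpace.norm_single]⟩
      ((continuous_norm.comp T.continuous).continuousOn)
  have hx₀ : ‖x₀‖ = 1 := by simpa [mem_sphere_iff_norm] using hx₀mem
  have hmax : ‖T‖ = ‖T x₀‖ := by
    apply le_antisymm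
    · apply T.opNorm_le_bound (norm_nonneg _)
      intro x
      rcases eq_or_ne x 0 with rfl | hx
      · simp
      · have hxn : ‖x‖ ≠ 0 := norm_ne_zero_iff.mpr hx
        have hmem : (((‖x‖⁻¹ : ℝ) : ℂ) • x) ∈ Metric.sphere (0 : EuclideanSpace ℂ (Fin n)) 1 := by
          simp [mem_sphere_iff_norm, norm_smul, abs_of_nonneg (norm_nonneg x),
            inv_mul_cancel₀ hxn]
        have h1 : ‖T ((((‖x‖⁻¹ : ℝ) : ℂ)) • x)‖ ≤ ‖T x₀‖ := hx₀max hmem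
        rw [map_smul, norm_smul, Complex.norm_real, Real.norm_eq_abs,
          abs_of_nonneg (inv_nonneg.mpr (norm_nonneg x))] at h1
        calc ‖T x‖ = ‖x‖ * (‖x‖⁻¹ * ‖T x‖) := by field_simp
          _ ≤ ‖x‖ * ‖T x₀‖ := by
              apply mul_le_mul_of_nonneg_left _ (norm_nonneg x)
              exact h1
          _ = ‖T x₀‖ * ‖x‖ := mul_comm _ _
    · simpa [hx₀] using T.le_opNorm x₀
  set s : ℝ := ‖T x₀‖ with hs
  have hspos : 0 < s := hmax ▸ hTpos
  have hrs : r ≤ s := hmax ▸ hrA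
  -- the unit vector in the direction of T x₀
  set u : EuclideanSpace ℂ (Fin m) := ((s⁻¹ : ℝ) : ℂ) • T x₀ with hu
  have hunorm : ‖u‖ = 1 := by
    rw [hu, norm_smul, Complex.norm_real, Real.norm_eq_abs, abs_of_pos (inv_pos.mpr hspos),
      ← hs, inv_mul_cancel₀ hspos.ne']
  have huzero : u ≠ 0 := by
    intro h; rw [h, norm_zero] at hunorm; exact one_ne_zero hunorm.symm
  -- find a unit vector orthogonal to u
  obtain ⟨v, hvorth, hvnorm⟩ :
      ∃ v : EuclideanSpace ℂ (Fin m), ⟪u, v⟫_ℂ = 0 ∧ ‖v‖ = 1 := by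
    have hfin : Module.finrank ℂ (ℂ ∙ u) + Module.finrank ℂ (ℂ ∙ u)ᗮ
        = Module.finrank ℂ (EuclideanSpace ℂ (Fin m)) :=
      Submodule.finrank_add_finrank_orthogonal _
    rw [finrank_span_singleton huzero, finrank_euclideanSpace_fin] at hfin
    have hpos : 0 < Module.finrank ℂ (ℂ ∙ u)ᗮ := by omega
    have hne : (ℂ ∙ u)ᗮ ≠ ⊥ := by
      intro hbot
      rw [hbot] at hpos
      simp at hpos
    obtain ⟨v₀, hv₀mem, hv₀ne⟩ := Submodule.exists_mem_ne_zero_of_ne_bot hne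
    have hv₀n : ‖v₀‖ ≠ 0 := norm_ne_zero_iff.mpr hv₀ne
    refine ⟨((‖v₀‖⁻¹ : ℝ) : ℂ) • v₀, ?_, ?_⟩
    · have := hv₀mem u (Submodule.mem_span_singleton_self u)
      rw [inner_smul_right]
      simp [this]
    · rw [norm_smul, Complex.norm_real, Real.norm_eq_abs, abs_of_nonneg (by positivity),
        inv_mul_cancel₀ hv₀n]
  -- build y
  set c : ℂ := ((r / s : ℝ) : ℂ) * Complex.exp (-(θ : ℂ) * Complex.I) with hc
  set t : ℝ := Real.sqrt (1 - (r / s) ^ 2) with ht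
  set y : EuclideanSpace ℂ (Fin m) := c • u + (t : ℂ) • v with hy
  have hrs01 : 0 < r / s := div_pos hr hspos
  have hrs1 : r / s ≤ 1 := (div_le_one hspos).mpr hrs
  have habsc : ‖c‖ = r / s := by
    have h2 : ‖Complex.exp (-(θ : ℂ) * Complex.I)‖ = 1 := by
      rw [Complex.norm_exp]; simp
    rw [hc, norm_mul, Complex.norm_real, Real.norm_eq_abs,
      abs_of_pos hrs01, h2, mul_one]
  have ht2 : t ^ 2 = 1 - (r / s) ^ 2 := by
    rw [ht, Real.sq_sqrt]
    nlinarith [hrs01.le, hrs1]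
  have hynorm : ‖y‖ = 1 := by
    have horth : ⟪c • u, (t : ℂ) • v⟫_ℂ = 0 := by
      rw [inner_smul_left, inner_smul_right, hvorth]; ring
    have hsq : ‖y‖ ^ 2 = 1 := by
      rw [hy, norm_add_sq (𝕜 := ℂ), horth]
      simp only [map_zero, mul_zero, add_zero, norm_smul]
      rw [hunorm, hvnorm, habsc, Complex.norm_real, Real.norm_eq_abs,
        abs_of_nonneg (Real.sqrt_nonneg _), ← ht]
      rw [mul_one, mul_one]
      nlinarith [ht2]
    rw [← Real.sqrt_one, ← hsq, Real.sqrt_sq (norm_nonneg y)]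
  refine ⟨x₀, y, hx₀, hynorm, ?_⟩
  have hsne : (s : ℂ) ≠ 0 := Complex.ofReal_ne_zero.mpr hspos.ne'
  have hTx : T x₀ = (s : ℂ) • u := by
    rw [hu, smul_smul, ← Complex.ofReal_mul, mul_inv_cancel₀ hspos.ne']
    simp
  clear_value u
  have key : ⟪y, T x₀⟫_ℂ = r * Complex.exp (θ * Complex.I) := by
    have hvu : ⟪v, u⟫_ℂ = 0 := by
      rw [← inner_conj_symm, hvorth, map_zero]
    have huu : ⟪u, u⟫_ℂ = 1 := by
      rw [inner_self_eq_norm_sq_to_K (𝕜 := ℂ), hunorm]; norm_num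
    rw [hTx, hy, inner_add_left, inner_smul_left, inner_smul_left,
      inner_smul_right, inner_smul_right, hvu, huu]
    have hcconj : (starRingEnd ℂ) c = ((r / s : ℝ) : ℂ) * Complex.exp ((θ : ℂ) * Complex.I) := by
      rw [hc, map_mul, Complex.conj_ofReal, ← Complex.exp_conj]
      congr 1
      simp [map_mul, Complex.conj_ofReal]
    rw [hcconj]
    push_cast
    field_simp
    simp
  calc dotProduct (star (y : Fin m → ℂ)) (A.mulVec (x₀ : Fin n → ℂ))
      = ⟪y, T x₀⟫_ℂ := by rw [EuclideanSpace.inner_eq_star_dotProduct, dotProduct_comm]; rfl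
    _ = r * Complex.exp (θ * Complex.I) := key
end

section
/- Let A, B₀ ∈ M_{m,n}(ℂ) with ‖B₀‖_F ≥ 1, and write c = ⟨A, B₀⟩/‖B₀‖_F². Then |c| + ‖A − c B₀‖_F · √(1 − ‖B₀‖_F^{-2}) ≤ ‖A‖_F. Consequently every disc w_{‖·‖_F}(A, B₀) = {z : |z − c| ≤ ‖A − c B₀‖_F √(1 − ‖B₀‖_F^{-2})} is contained in the disc D(0, ‖A‖_F). -/
open scoped Matrix

/-- The Frobenius norm of a rectangular complex matrix. -/
noncomputable def frobNorm {m n : ℕ} (A : Matrix (Fin m) (Fin n) ℂ) : ℝ :=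
  Real.sqrt (∑ i, ∑ j, ‖A i j‖ ^ 2)

/-- The Frobenius inner product `⟨A, B⟩ = tr(B* A)`. -/
noncomputable def frobInner {m n : ℕ} (A B : Matrix (Fin m) (Fin n) ℂ) : ℂ :=
  (Bᴴ * A).trace

open scoped ComplexConjugate

noncomputable def toE {m n : ℕ} (A : Matrix (Fin m) (Fin n) ℂ) :
    EuclideanSpace ℂ (Fin m × Fin n) := WithLp.toLp 2 (fun p : Fin m × Fin n => A p.1 p.2)

lemma frobNorm_eq {m n : ℕ} (A : Matrix (Fin m) (Fin n) ℂ) : frobNorm A = ‖toE A‖ := by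
  rw [frobNorm, EuclideanSpace.norm_eq]
  congr 1
  rw [Fintype.sum_prod_type]
  simp [toE]

lemma frobInner_eq {m n : ℕ} (A B : Matrix (Fin m) (Fin n) ℂ) :
    frobInner A B = @inner ℂ _ _ (toE B) (toE A) := by
  rw [frobInner, PiLp.inner_apply, Matrix.trace, Fintype.sum_prod_type]
  simp only [Matrix.diag_apply, Matrix.mul_apply, Matrix.conjTranspose_apply, toE,
    RCLike.inner_apply, starRingEnd_apply]
  rw [Finset.sum_comm]
  exact Finset.sum_congr rfl fun _ _ => Finset.sum_congr rfl fun _ _ => mul_comm _ _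

-- real inequality
lemma real_key (a0 r N s : ℝ) (ha : 0 ≤ a0) (hr : 0 ≤ r) (hN : 1 ≤ N)
    (hs : s = Real.sqrt (1 - (N ^ 2)⁻¹)) :
    a0 + r * s ≤ Real.sqrt (r ^ 2 + a0 ^ 2 * N ^ 2) := by
  have hN0 : (0:ℝ) < N := lt_of_lt_of_le one_pos hN
  have hN2 : (1:ℝ) ≤ N ^ 2 := by nlinarith
  have h1 : (0:ℝ) ≤ 1 - (N ^ 2)⁻¹ := by
    have : (N ^ 2)⁻¹ ≤ 1 := by
      rw [inv_le_one_iff₀]; right; exact hN2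
    linarith
  have hs0 : 0 ≤ s := hs ▸ Real.sqrt_nonneg _
  have hs2 : s ^ 2 = 1 - (N ^ 2)⁻¹ := by rw [hs, Real.sq_sqrt h1]
  have hs2' : s ^ 2 * N ^ 2 = N ^ 2 - 1 := by
    rw [hs2]; field_simp
  have hsq : (a0 + r * s) ^ 2 ≤ r ^ 2 + a0 ^ 2 * N ^ 2 := by
    nlinarith [sq_nonneg (r - a0 * N ^ 2 * s), sq_nonneg (r*s), sq_nonneg a0, hN2]
  calc a0 + r * s = Real.sqrt ((a0 + r * s) ^ 2) := by
        rw [Real.sqrt_sq (by positivity)]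
    _ ≤ Real.sqrt (r ^ 2 + a0 ^ 2 * N ^ 2) := Real.sqrt_le_sqrt hsq

theorem stmt8 {m n : ℕ} (A B₀ : Matrix (Fin m) (Fin n) ℂ) (hB : 1 ≤ frobNorm B₀)
    (c : ℂ) (hc : c = frobInner A B₀ / ((frobNorm B₀ : ℂ) ^ 2)) :
    ‖c‖ + frobNorm (A - c • B₀) * Real.sqrt (1 - ((frobNorm B₀) ^ 2)⁻¹)
      ≤ frobNorm A ∧
    {z : ℂ | ‖z - c‖ ≤ frobNorm (A - c • B₀) * Real.sqrt (1 - ((frobNorm B₀) ^ 2)⁻¹)}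
      ⊆ Metric.closedBall (0 : ℂ) (frobNorm A) := by
  set a := toE A with ha
  set b := toE B₀ with hb
  have hN : frobNorm B₀ = ‖b‖ := frobNorm_eq B₀
  have hNb : (1:ℝ) ≤ ‖b‖ := hN ▸ hB
  have hNb0 : ((‖b‖:ℂ) ^ 2) ≠ 0 := by
    norm_cast
    positivity
  have hcb : @inner ℂ _ _ b a = c * (‖b‖:ℂ) ^ 2 := by
    rw [hc, frobInner_eq, hN]
    rw [div_mul_cancel₀ _ hNb0]
  -- Pythagoras
  have hsub : toE (A - c • B₀) = a - c • b := by ext p; simp [a, b, toE]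
  have hpyth : ‖a - c • b‖ ^ 2 = ‖a‖ ^ 2 - ‖c‖ ^ 2 * ‖b‖ ^ 2 := by
    have h2 : @inner ℂ _ _ a (c • b) = ((‖c‖ ^ 2 * ‖b‖ ^ 2 : ℝ) : ℂ) := by
      rw [inner_smul_right, ← inner_conj_symm, hcb, map_mul, ← Complex.ofReal_pow,
        Complex.conj_ofReal, ← mul_assoc, Complex.mul_conj]
      rw [Complex.normSq_eq_norm_sq]
      push_cast
      ring
    rw [@norm_sub_sq ℂ, h2, norm_smul]
    simp only [RCLike.re_to_complex, Complex.ofReal_re, mul_pow]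
    ring
  have hA2 : ‖a‖ ^ 2 = ‖a - c • b‖ ^ 2 + ‖c‖ ^ 2 * ‖b‖ ^ 2 := by linarith
  have hmain : ‖c‖ + frobNorm (A - c • B₀) * Real.sqrt (1 - ((frobNorm B₀) ^ 2)⁻¹)
      ≤ frobNorm A := by
    rw [frobNorm_eq (A - c • B₀), frobNorm_eq A, hN, hsub, ← ha]
    have := real_key (‖c‖) ‖a - c • b‖ ‖b‖ (Real.sqrt (1 - (‖b‖ ^ 2)⁻¹))
      (norm_nonneg c) (norm_nonneg _) hNb rfl
    calc ‖c‖ + ‖a - c • b‖ * Real.sqrt (1 - (‖b‖ ^ 2)⁻¹)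
        ≤ Real.sqrt (‖a - c • b‖ ^ 2 + ‖c‖ ^ 2 * ‖b‖ ^ 2) := this
      _ = ‖a‖ := by rw [← hA2, Real.sqrt_sq (norm_nonneg _)]
  refine ⟨hmain, fun z hz => ?_⟩
  simp only [Set.mem_setOf_eq] at hz
  rw [Metric.mem_closedBall, dist_zero_right]
  calc ‖z‖ ≤ ‖z - c‖ + ‖c‖ := by
        simpa using norm_add_le (z - c) c
    _ ≤ frobNorm (A - c • B₀) * Real.sqrt (1 - ((frobNorm B₀) ^ 2)⁻¹) + ‖c‖ := by
        linarith
    _ ≤ frobNorm A := by linarith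
end

section
/- Let m > n, A ∈ M_{m,n}(ℂ), and H ∈ M_{m,n}(ℂ) with H*H = I_n. Then F(H*A) ⊆ F(A H*), i.e., the lower numerical range w_l(A) is contained in the higher numerical range w_h(A). -/
open scoped Matrix InnerProductSpace

/-- The classical numerical range `F(M) = {x* M x : ‖x‖₂ = 1}` of a square matrix. -/
def numRangeSq {ι : Type*} [Fintype ι] (M : Matrix ι ι ℂ) : Set ℂ :=
  {z | ∃ x : EuclideanSpace ℂ ι, ‖x‖ = 1 ∧
    dotProduct (star (x : ι → ℂ)) (M.mulVec (x : ι → ℂ)) = z}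

theorem stmt12 {m n : ℕ} (hmn : n < m) (A : Matrix (Fin m) (Fin n) ℂ)
    (H : Matrix (Fin m) (Fin n) ℂ) (hH : Hᴴ * H = 1) :
    numRangeSq (Hᴴ * A) ⊆ numRangeSq (A * Hᴴ) := by
  rintro z ⟨x, hx, rfl⟩
  refine ⟨(WithLp.equiv 2 _).symm (H.mulVec x), ?_, ?_⟩
  · have h1 : ⟪(WithLp.equiv 2 (Fin m → ℂ)).symm (H.mulVec x),
        (WithLp.equiv 2 (Fin m → ℂ)).symm (H.mulVec x)⟫_ℂ = ⟪x, x⟫_ℂ := by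
      rw [WithLp.equiv_symm_apply, EuclideanSpace.inner_toLp_toLp, EuclideanSpace.inner_eq_star_dotProduct]
      rw [Matrix.star_mulVec, dotProduct_comm, Matrix.dotProduct_mulVec, Matrix.vecMul_vecMul, hH,
        Matrix.vecMul_one]
      exact dotProduct_comm _ _
    rw [inner_self_eq_norm_sq_to_K, inner_self_eq_norm_sq_to_K] at h1
    have h2 : ‖(WithLp.equiv 2 (Fin m → ℂ)).symm (H.mulVec x)‖ ^ 2 = ‖x‖ ^ 2 := by
      exact_mod_cast h1
    nlinarith [norm_nonneg ((WithLp.equiv 2 (Fin m → ℂ)).symm (H.mulVec x)), hx]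
  · show dotProduct (star (H.mulVec x)) ((A * Hᴴ).mulVec (H.mulVec x)) = _
    have key : Hᴴ * (A * Hᴴ * H) = Hᴴ * A := by
      rw [Matrix.mul_assoc A, hH, Matrix.mul_one]
    rw [Matrix.star_mulVec, Matrix.dotProduct_mulVec, Matrix.dotProduct_mulVec,
      Matrix.vecMul_vecMul, Matrix.vecMul_vecMul, key, ← Matrix.dotProduct_mulVec]
end
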